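/- Let {E_{α,k} : k=1,…,M}, α=1,…,N, be an informationally complete (N,M)-POVM on ℂ^d with efficiency parameter x, and set w = d/M, y = (d − Mx)/(M(M−1)), z = d/M², and F_{α,k} = (1/(x−y))·(E_{α,k} − (((N−1)z + y)/(Nw))·I_d). Then every density matrix ρ on ℂ^d satisfies ρ = Σ_{α=1}^{N} Σ_{k=1}^{M} tr(E_{α,k} ρ)·F_{α,k}. -/

import Mathlib

open scoped BigOperators ComplexOrder
open Matrix

noncomputable def traceNorm {m n : Type*} [Fintype m] [Fintype n] [DecidableEq n]
    (X : Matrix m n ℂ) : ℝ :=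
  ((Matrix.posSemidef_conjTranspose_mul_self X).1.eigenvectorUnitary.1 *
    diagonal (((↑) : ℝ → ℂ) ∘ (Real.sqrt ·) ∘ (Matrix.posSemidef_conjTranspose_mul_self X).1.eigenvalues) *
    (star (Matrix.posSemidef_conjTranspose_mul_self X).1.eigenvectorUnitary : Matrix n n ℂ)).trace.re

def IsDensityMatrix {ι : Type*} [Fintype ι] (ρ : Matrix ι ι ℂ) : Prop :=
  ρ.PosSemidef ∧ ρ.trace = 1

def IsNMPOVM (d N M : ℕ) (x : ℝ)
    (E : Fin N → Fin M → Matrix (Fin d) (Fin d) ℂ) : Prop :=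
  (∀ α k, (E α k).PosSemidef) ∧
  (∀ α, ∑ k, E α k = 1) ∧
  (∀ α k, (E α k).trace = (((d : ℝ) / M : ℝ) : ℂ)) ∧
  (∀ α k, (E α k * E α k).trace = (x : ℂ)) ∧
  (∀ α k l, k ≠ l → (E α k * E α l).trace =
      ((((d : ℝ) - M * x) / (M * ((M : ℝ) - 1)) : ℝ) : ℂ)) ∧
  (∀ α β k l, α ≠ β → (E α k * E β l).trace = (((d : ℝ) / M ^ 2 : ℝ) : ℂ)) ∧
  ((d : ℝ) / M ^ 2 < x ∧ x ≤ min ((d : ℝ) ^ 2 / M ^ 2) ((d : ℝ) / M))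

def IsInfoComplete (d N M : ℕ) : Prop := ((M : ℝ) - 1) * N = (d : ℝ) ^ 2 - 1

-- Auxiliary machinery
abbrev Md (d : ℕ) := Matrix (Fin d) (Fin d) ℂ

noncomputable def trform {d : ℕ} (X : Md d) : Md d →ₗ[ℂ] ℂ :=
  (Matrix.traceLinearMap (Fin d) ℂ ℂ) ∘ₗ (LinearMap.mulLeft ℂ X)

@[simp] lemma trform_apply {d : ℕ} (X A : Md d) : trform X A = (X * A).trace := rfl

noncomputable def rk1 {d : ℕ} (X Y : Md d) : Md d →ₗ[ℂ] Md d :=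
  dualTensorHom ℂ (Md d) (Md d) ((trform X) ⊗ₜ Y)

@[simp] lemma rk1_apply {d : ℕ} (X Y A : Md d) : rk1 X Y A = (X * A).trace • Y := by
  simp [rk1]

lemma trace_rk1 {d : ℕ} (X Y : Md d) :
    LinearMap.trace ℂ (Md d) (rk1 X Y) = (X * Y).trace := by
  rw [rk1, LinearMap.trace_eq_contract_apply]; simp

set_option maxHeartbeats 2000000 in
theorem state_reconstruction (d N M : ℕ) (x w y z : ℝ)
    (E : Fin N → Fin M → Matrix (Fin d) (Fin d) ℂ)
    (hE : IsNMPOVM d N M x E) (hIC : IsInfoComplete d N M)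
    (hw : w = (d : ℝ) / M) (hy : y = ((d : ℝ) - M * x) / (M * ((M : ℝ) - 1)))
    (hz : z = (d : ℝ) / M ^ 2)
    (ρ : Matrix (Fin d) (Fin d) ℂ) (hρ : IsDensityMatrix ρ) :
    ρ = ∑ α, ∑ k, (E α k * ρ).trace •
      ((1 / ((x : ℂ) - (y : ℂ))) •
        (E α k - ((((N : ℂ) - 1) * (z : ℂ) + (y : ℂ)) / ((N : ℂ) * (w : ℂ))) •
          (1 : Matrix (Fin d) (Fin d) ℂ))) := by
  obtain ⟨hpos, hsum, htr, hx2, hxyt, hzt, h1, h2⟩ := hE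
  replace hIC : ((M : ℝ) - 1) * N = (d : ℝ) ^ 2 - 1 := hIC
  -- numeric facts
  have hxw : x ≤ (d:ℝ)/M := le_trans h2 (min_le_right _ _)
  have hxd : x ≤ (d:ℝ)^2/M^2 := le_trans h2 (min_le_left _ _)
  have hM0 : M ≠ 0 := by rintro rfl; simp at h1 hxw; linarith
  have hMpos : (0:ℝ) < M := by positivity
  have hd0 : d ≠ 0 := by rintro rfl; simp at h1 hxw; linarith
  have hdpos : (0:ℝ) < d := by positivity
  have hM1 : M ≠ 1 := by rintro rfl; simp at h1 hxw; linarith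
  have hM1' : (1:ℝ) < M := by
    have : 1 < M := by omega
    exact_mod_cast this
  have hdd : (d:ℝ) < (d:ℝ)^2 := by
    have h3 := lt_of_lt_of_le h1 hxd
    have hM2 : (0:ℝ) < (M:ℝ)^2 := by positivity
    calc (d:ℝ) = ((d:ℝ)/M^2) * M^2 := by field_simp
    _ < ((d:ℝ)^2/M^2) * M^2 := mul_lt_mul_of_pos_right h3 hM2
    _ = (d:ℝ)^2 := by field_simp
  have hN0 : N ≠ 0 := by
    rintro rfl
    rw [Nat.cast_zero, mul_zero] at hIC
    nlinarith
  have hN1 : 1 ≤ N := Nat.one_le_iff_ne_zero.mpr hN0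
  have hxygt : 0 < x - y := by
    rw [hy]
    rw [sub_pos, div_lt_iff₀ (by nlinarith)]
    have : (d:ℝ) < M^2 * x := by
      rw [div_lt_iff₀ (by positivity)] at h1; linarith
    nlinarith
  -- key real scalar identity: d*(y + (N-1)z) = w^2*N - w*(x-y)
  have hMM : (M:ℝ) * ((M:ℝ)-1) ≠ 0 := mul_ne_zero (by positivity) (by linarith)
  have hyy : y * ((M:ℝ)*((M:ℝ)-1)) = (d:ℝ) - M*x := by
    rw [hy, div_mul_cancel₀ _ hMM]
  have hkeyR : (d:ℝ) * (y + ((N:ℝ)-1)*z) = w^2*(N:ℝ) - w*(x-y) := by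
    subst hw hz
    have hMne' : (M:ℝ) ≠ 0 := by positivity
    field_simp
    linear_combination hyy
  -- complex versions
  have hMne : (M:ℝ) ≠ 0 := by positivity
  have hdne : (d:ℝ) ≠ 0 := by positivity
  have hNne : (N:ℝ) ≠ 0 := Nat.cast_ne_zero.mpr hN0
  have hkeyC : (d:ℂ) * ((y:ℂ) + ((N:ℂ)-1)*(z:ℂ)) = (w:ℂ)^2*(N:ℂ) - (w:ℂ)*((x:ℂ)-(y:ℂ)) := by
    exact_mod_cast congrArg (Complex.ofReal) hkeyR
  have hICC : ((M:ℂ) - 1) * (N:ℂ) = (d:ℂ)^2 - 1 := by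
    exact_mod_cast congrArg (Complex.ofReal) hIC
  have hwC : (w:ℂ) * (M:ℂ) = (d:ℂ) := by
    have : w * M = d := by rw [hw]; field_simp
    exact_mod_cast congrArg (Complex.ofReal) this
  have hxyC : (x:ℂ) - (y:ℂ) ≠ 0 := by
    have : ((x - y : ℝ) : ℂ) ≠ 0 := Complex.ofReal_ne_zero.mpr (ne_of_gt hxygt)
    push_cast at this; exact this
  have hwne : (w:ℂ) ≠ 0 := by
    intro h; rw [h, zero_mul] at hwC; exact (Complex.ofReal_ne_zero.mpr hdne) hwC.symm
  have hdCne : (d:ℂ) ≠ 0 := Nat.cast_ne_zero.mpr hd0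
  have hNCne : (N:ℂ) ≠ 0 := Nat.cast_ne_zero.mpr hN0
  -- the frame operator
  set S : Md d →ₗ[ℂ] Md d := ∑ α, ∑ k, rk1 (E α k) (E α k) with hS
  have hSapp : ∀ A : Md d, S A = ∑ α, ∑ k, (E α k * A).trace • E α k := by
    intro A; simp [hS, LinearMap.sum_apply]
  -- sum of traces
  have hsumtr : ∀ A : Md d, ∑ α, ∑ k, (E α k * A).trace = (N:ℂ) * A.trace := by
    intro A
    have : ∀ α : Fin N, ∑ k, (E α k * A).trace = A.trace := by
      intro α
      rw [← Matrix.trace_sum, ← Finset.sum_mul, hsum α, one_mul]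
    rw [Finset.sum_congr rfl (fun α _ => this α)]
    simp [Finset.sum_const, mul_comm]
  -- S on the POVM elements
  have hSE : ∀ β l, S (E β l) = ((x:ℂ) - (y:ℂ)) • E β l
      + (((y:ℂ) + ((N:ℂ)-1) * (z:ℂ))) • (1 : Md d) := by
    intro β l
    rw [hSapp]
    have inner_ne : ∀ α, α ≠ β → ∑ k, (E α k * E β l).trace • E α k = (z:ℂ) • (1 : Md d) := by
      intro α hα
      have h : ∀ k, (E α k * E β l).trace • E α k = (z:ℂ) • E α k := by
        intro k; rw [hzt α β k l hα, hz]
      rw [Finset.sum_congr rfl (fun k _ => h k), ← Finset.smul_sum, hsum α]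
    have inner_eq : ∑ k, (E β k * E β l).trace • E β k
        = ((x:ℂ) - (y:ℂ)) • E β l + (y:ℂ) • (1 : Md d) := by
      have h : ∀ k, (E β k * E β l).trace • E β k
          = (y:ℂ) • E β k + (if k = l then ((x:ℂ) - (y:ℂ)) • E β l else 0) := by
        intro k
        by_cases h : k = l
        · subst h; rw [hx2, if_pos rfl]; module
        · rw [hxyt β k l h, if_neg h, ← hy]; module
      rw [Finset.sum_congr rfl (fun k _ => h k), Finset.sum_add_distrib,
        ← Finset.smul_sum, hsum β, Finset.sum_ite_eq' Finset.univ l]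
      simp only [Finset.mem_univ, if_pos]
      module
    rw [Finset.sum_eq_sum_sdiff_singleton_add (Finset.mem_univ β)]
    rw [Finset.sum_congr rfl (fun α hα => inner_ne α (by
      simp only [Finset.mem_sdiff, Finset.mem_singleton] at hα; exact hα.2))]
    rw [inner_eq, Finset.sum_const]
    have hcard : (Finset.univ \ {β} : Finset (Fin N)).card = N - 1 := by
      rw [Finset.card_sdiff_of_subset (by simp)]
      simp
    rw [hcard]
    have : ((N - 1 : ℕ) : ℂ) = (N:ℂ) - 1 := by
      push_cast [hN1]; ring
    rw [← Nat.cast_smul_eq_nsmul ℂ, this]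
    module
  -- S(1)
  have hS1 : S (1 : Md d) = ((w:ℂ) * (N:ℂ)) • (1 : Md d) := by
    rw [hSapp]
    have h : ∀ (α : Fin N) (k : Fin M), (E α k * (1:Md d)).trace • E α k = (w:ℂ) • E α k := by
      intro α k; rw [mul_one, htr α k, hw]
    rw [Finset.sum_congr rfl (fun α _ => Finset.sum_congr rfl (fun k _ => h α k))]
    simp only [← Finset.smul_sum]
    rw [Finset.sum_congr rfl (fun α _ => by rw [hsum α]), Finset.sum_const]
    rw [← Nat.cast_smul_eq_nsmul ℂ, smul_smul]
    simp [Finset.card_univ, mul_comm]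
  -- trace of S A
  have htrS : ∀ A : Md d, (S A).trace = (w:ℂ) * ((N:ℂ) * A.trace) := by
    intro A
    rw [hSapp, Matrix.trace_sum]
    have : ∀ α : Fin N, (∑ k, (E α k * A).trace • E α k).trace
        = ∑ k, (E α k * A).trace * (w:ℂ) := by
      intro α
      rw [Matrix.trace_sum]
      exact Finset.sum_congr rfl (fun k _ => by rw [Matrix.trace_smul, htr α k, hw, smul_eq_mul])
    rw [Finset.sum_congr rfl (fun α _ => this α)]
    simp only [← Finset.sum_mul]
    rw [hsumtr]
    ring
  -- S ∘ S
  have hSS : ∀ A : Md d, S (S A) = ((x:ℂ)-(y:ℂ)) • S A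
      + ((((y:ℂ) + ((N:ℂ)-1)*(z:ℂ)) * ((N:ℂ) * A.trace))) • (1 : Md d) := by
    intro A
    conv_lhs => rw [hSapp A]
    rw [map_sum]
    have e1 : ∀ α, S (∑ k, (E α k * A).trace • E α k)
        = ∑ k, (E α k * A).trace • S (E α k) := by
      intro α; rw [map_sum]; exact Finset.sum_congr rfl fun k _ => map_smul S _ _
    rw [Finset.sum_congr rfl fun α _ => e1 α]
    have e2 : ∀ (α : Fin N) (k : Fin M), (E α k * A).trace • S (E α k)
        = ((x:ℂ)-(y:ℂ)) • ((E α k * A).trace • E α k)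
          + ((E α k * A).trace * ((y:ℂ) + ((N:ℂ)-1)*(z:ℂ))) • (1 : Md d) := by
      intro α k; rw [hSE α k]; module
    rw [Finset.sum_congr rfl fun α _ => Finset.sum_congr rfl fun k _ => e2 α k]
    simp only [Finset.sum_add_distrib, ← Finset.smul_sum, ← Finset.sum_smul]
    rw [← hSapp]
    simp only [← Finset.sum_mul]
    rw [hsumtr]
    ring_nf
  -- scalars
  have hdX : (d:ℂ) * ((x:ℂ) - (y:ℂ)) ≠ 0 := mul_ne_zero hdCne hxyC
  have hzC2 : (z:ℂ) * (M:ℂ)^2 = (d:ℂ) := by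
    have : z * (M:ℝ)^2 = d := by rw [hz]; field_simp
    exact_mod_cast congrArg (Complex.ofReal) this
  have hMC1 : (M:ℂ) - 1 ≠ 0 := by
    have : ((M:ℝ) - 1 : ℝ) ≠ 0 := by linarith
    have h2' : (((M:ℝ) - 1 : ℝ) : ℂ) ≠ 0 := Complex.ofReal_ne_zero.mpr this
    push_cast at h2'; exact h2'
  have hMCne : (M:ℂ) ≠ 0 := Nat.cast_ne_zero.mpr hM0
  -- the denominator-free operator T
  set T : Md d →ₗ[ℂ] Md d := (d:ℂ) • S
      + ((((x:ℂ) - (y:ℂ)) - (w:ℂ)*(N:ℂ))) • rk1 (1 : Md d) (1 : Md d) with hT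
  have hTapp : ∀ A : Md d, T A = (d:ℂ) • S A
      + (((((x:ℂ) - (y:ℂ)) - (w:ℂ)*(N:ℂ))) * A.trace) • (1 : Md d) := by
    intro A
    simp only [hT, LinearMap.add_apply, LinearMap.smul_apply, rk1_apply, one_mul, smul_smul]
  have htr1 : (1 : Md d).trace = (d : ℂ) := by
    rw [Matrix.trace_one]; simp
  have hTT : ∀ A : Md d, T (T A) = ((d:ℂ) * ((x:ℂ) - (y:ℂ))) • T A := by
    intro A
    conv_rhs => rw [hTapp A]
    rw [hTapp (T A), hTapp A, map_add, _root_.map_smul, _root_.map_smul, hSS A, hS1,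
      Matrix.trace_add, Matrix.trace_smul, htrS A, Matrix.trace_smul, htr1]
    match_scalars
    · ring
    · simp only [smul_eq_mul]
      linear_combination ((d:ℂ) * (N:ℂ) * Matrix.trace A) * hkeyC
  set Q : Md d →ₗ[ℂ] Md d := (1/((d:ℂ) * ((x:ℂ) - (y:ℂ)))) • T with hQ
  -- idempotent
  have hQQ : ∀ A : Md d, Q (Q A) = Q A := by
    intro A
    have e1 : (1/((d:ℂ) * ((x:ℂ) - (y:ℂ)))) * ((1/((d:ℂ) * ((x:ℂ) - (y:ℂ))))
        * ((d:ℂ) * ((x:ℂ) - (y:ℂ)))) = 1/((d:ℂ) * ((x:ℂ) - (y:ℂ))) := by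
      field_simp
    calc Q (Q A) = (1/((d:ℂ) * ((x:ℂ) - (y:ℂ)))) • ((1/((d:ℂ) * ((x:ℂ) - (y:ℂ)))) • T (T A)) := by
          rw [hQ]; simp only [LinearMap.smul_apply, _root_.map_smul]
    _ = (1/((d:ℂ) * ((x:ℂ) - (y:ℂ)))) • ((1/((d:ℂ) * ((x:ℂ) - (y:ℂ)))) •
          (((d:ℂ) * ((x:ℂ) - (y:ℂ))) • T A)) := by rw [hTT A]
    _ = (1/((d:ℂ) * ((x:ℂ) - (y:ℂ)))) • T A := by
          rw [smul_smul, smul_smul]; congr 1; field_simp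
    _ = Q A := by rw [hQ]; simp only [LinearMap.smul_apply]
  -- trace of S and Q
  have htraceS : LinearMap.trace ℂ (Md d) S = (N:ℂ)*(M:ℂ)*(x:ℂ) := by
    rw [hS, map_sum]
    rw [Finset.sum_congr rfl fun α _ => map_sum (LinearMap.trace ℂ (Md d)) _ _]
    rw [Finset.sum_congr rfl fun α _ => Finset.sum_congr rfl fun k _ =>
      (trace_rk1 _ _).trans (hx2 α k)]
    simp [Finset.sum_const, Finset.card_univ]
    ring
  have hyyC : (y:ℂ) * ((M:ℂ)*((M:ℂ)-1)) = (d:ℂ) - (M:ℂ)*(x:ℂ) := by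
    exact_mod_cast congrArg (Complex.ofReal) hyy
  have htraceQ : LinearMap.trace ℂ (Md d) Q = ((d:ℂ))^2 := by
    rw [hQ, _root_.map_smul, hT, map_add, _root_.map_smul, _root_.map_smul, htraceS,
      trace_rk1, one_mul, htr1]
    rw [smul_eq_mul, smul_eq_mul, smul_eq_mul, one_div, inv_mul_eq_iff_eq_mul₀ hdX]
    refine mul_left_cancel₀ (pow_ne_zero 2 (mul_ne_zero hMCne hMC1)) ?_
    linear_combination (-(d:ℂ)*(N:ℂ)*(M:ℂ) + 2*(d:ℂ)*(N:ℂ)*(M:ℂ)^2 - (d:ℂ)*(N:ℂ)*(M:ℂ)^3) * hwC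
      + ((d:ℂ)^2*(M:ℂ) - (d:ℂ)^2*(M:ℂ)^2 - (x:ℂ)*(d:ℂ)*(M:ℂ)^3 + (x:ℂ)*(d:ℂ)*(M:ℂ)^4) * hICC
      + ((d:ℂ)*(M:ℂ) - (d:ℂ)*(M:ℂ)^2 - (d:ℂ)^3*(M:ℂ) + (d:ℂ)^3*(M:ℂ)^2) * hyyC
  -- Q is a projection with full rank, hence the identity
  have hproj : LinearMap.IsProj (LinearMap.range Q) Q :=
    ⟨fun A => LinearMap.mem_range_self Q A, by rintro A ⟨B, rfl⟩; exact hQQ B⟩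
  have htrproj := hproj.trace
  rw [htraceQ] at htrproj
  have hnat : Module.finrank ℂ (LinearMap.range Q) = d * d := by
    have h4 : ((Module.finrank ℂ (LinearMap.range Q) : ℕ) : ℂ) = ((d * d : ℕ) : ℂ) := by
      rw [← htrproj]; push_cast; ring
    exact_mod_cast h4
  have hfullrank : Module.finrank ℂ (LinearMap.range Q) = Module.finrank ℂ (Md d) := by
    rw [hnat, Module.finrank_matrix]
    simp
  have hrange : LinearMap.range Q = ⊤ := Submodule.eq_top_of_finrank_eq hfullrank
  have hQid : ∀ A : Md d, Q A = A := by
    intro A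
    obtain ⟨B, hB⟩ := LinearMap.range_eq_top.mp hrange A
    rw [← hB, hQQ B]
  -- apply to ρ
  have hρ1 := hρ.2
  have hTρ : T ρ = ((d:ℂ) * ((x:ℂ) - (y:ℂ))) • ρ := by
    have h5 := hQid ρ
    rw [hQ, LinearMap.smul_apply] at h5
    calc T ρ = ((d:ℂ) * ((x:ℂ) - (y:ℂ))) • ((1/((d:ℂ) * ((x:ℂ) - (y:ℂ)))) • T ρ) := by
          rw [smul_smul, mul_one_div, div_self hdX, one_smul]
    _ = ((d:ℂ) * ((x:ℂ) - (y:ℂ))) • ρ := by rw [h5]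
  have hTρ' : ((d:ℂ) * ((x:ℂ) - (y:ℂ))) • ρ
      = (d:ℂ) • S ρ + ((((x:ℂ) - (y:ℂ)) - (w:ℂ)*(N:ℂ))) • (1 : Md d) := by
    rw [← hTρ, hTapp ρ, hρ1, mul_one]
  -- rewrite the big sum
  set c : ℂ := (((N : ℂ) - 1) * (z : ℂ) + (y : ℂ)) / ((N : ℂ) * (w : ℂ)) with hc
  have hc1 : c * ((N:ℂ) * (w:ℂ)) = ((N:ℂ) - 1) * (z:ℂ) + (y:ℂ) := by
    rw [hc]; field_simp
  clear_value c
  have hterm : ∀ (α : Fin N) (k : Fin M), (E α k * ρ).trace •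
        ((1 / ((x : ℂ) - (y : ℂ))) • (E α k - c • (1 : Md d)))
      = (1 / ((x : ℂ) - (y : ℂ))) • ((E α k * ρ).trace • E α k)
        - ((E α k * ρ).trace * ((1 / ((x : ℂ) - (y : ℂ))) * c)) • (1 : Md d) := by
    intro α k
    module
  have hsum_eq : (∑ α, ∑ k, (E α k * ρ).trace •
        ((1 / ((x : ℂ) - (y : ℂ))) • (E α k - c • (1 : Md d))))
      = (1 / ((x : ℂ) - (y : ℂ))) • S ρ
        - (((N:ℂ) * ((1 / ((x : ℂ) - (y : ℂ))) * c))) • (1 : Md d) := by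
    rw [Finset.sum_congr rfl fun α _ => Finset.sum_congr rfl fun k _ => hterm α k]
    simp only [Finset.sum_sub_distrib, ← Finset.smul_sum, ← Finset.sum_smul]
    rw [← hSapp]
    simp only [← Finset.sum_mul]
    rw [hsumtr, hρ1, mul_one]
  have hbc : (((x:ℂ) - (y:ℂ)) - (w:ℂ)*(N:ℂ)) = -((d:ℂ) * (N:ℂ) * c) := by
    refine mul_left_cancel₀ hwne ?_
    linear_combination (d:ℂ)*hc1 + hkeyC
  rw [hsum_eq]
  refine smul_right_injective (Md d) hdX ?_
  simp only []
  have e1 : ((d:ℂ) * ((x:ℂ) - (y:ℂ))) * (1 / ((x : ℂ) - (y : ℂ))) = (d:ℂ) := by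
    field_simp
  have e2 : ((d:ℂ) * ((x:ℂ) - (y:ℂ))) * ((N:ℂ) * ((1 / ((x : ℂ) - (y : ℂ))) * c))
      = (d:ℂ) * (N:ℂ) * c := by
    field_simp
  rw [smul_sub, smul_smul, smul_smul, e1, e2, hTρ', hbc]
  module
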